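/- Let n ≥ 3 be an integer, a ∈ ℝ, C > 0, and let u be a C¹ function on {x ∈ ℝⁿ : |x| > 1} with |u(x) − 1 − a|x|^{2−n}| ≤ C |x|^{1−n} and |∇u(x) − a ∇(|x|^{2−n})| ≤ C |x|^{−n}. Then the flux integrals converge: lim_{r→∞} ∫_{{|x| = r}} u(x) · (∇u(x) · x/r) dH^{n−1} = (2 − n) a |𝕊^{n−1}|. -/

import Mathlib

open MeasureTheory Filter InnerProductSpace
open scoped NNReal ENNReal Pointwise



section grad
variable {E : Type*} [NormedAddCommGroup E] [InnerProductSpace ℝ E] [CompleteSpace E]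

lemma hasGradientAt_norm_rpow (p : ℝ) {x : E} (hx : x ≠ 0) :
    HasGradientAt (fun y : E => ‖y‖ ^ p) ((p * ‖x‖ ^ (p - 2)) • x) x := by
  have hns : (0:ℝ) < ‖x‖ := norm_pos_iff.mpr hx
  have h2 : HasFDerivAt (fun y : E => ‖y‖ ^ 2) (2 • innerSL ℝ x) x :=
    (hasStrictFDerivAt_norm_sq x).hasFDerivAt
  have h1 : HasDerivAt (fun t : ℝ => t ^ (p/2)) ((p/2) * (‖x‖^2) ^ (p/2 - 1)) (‖x‖^2) :=
    Real.hasDerivAt_rpow_const (Or.inl (by positivity))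
  have h3 := h1.comp_hasFDerivAt x h2
  rw [hasGradientAt_iff_hasFDerivAt]
  convert h3 using 1
  · rfl
  · funext y
    show ‖y‖ ^ p = (‖y‖ ^ 2) ^ (p/2)
    rw [← Real.rpow_natCast ‖y‖ 2, ← Real.rpow_mul (norm_nonneg y)]
    congr 1
    ring
  · ext w
    have hx2 : (‖x‖ ^ 2 : ℝ) ^ (p/2 - 1) = ‖x‖ ^ (p - 2) := by
      rw [← Real.rpow_natCast ‖x‖ 2, ← Real.rpow_mul (norm_nonneg x)]
      norm_num
      ring_nf
    simp only [toDual_apply_apply, ContinuousLinearMap.smul_apply, ContinuousLinearMap.coe_smul',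
      Pi.smul_apply, innerSL_apply_apply, real_inner_smul_left, smul_eq_mul, hx2]
    ring_nf

end grad


section lip
variable {E : Type*} [NormedAddCommGroup E] [NormedSpace ℝ E]

lemma lipschitzOnWith_normalize :
    LipschitzOnWith 2 (fun x : E => ‖x‖⁻¹ • x) {x : E | 1 ≤ ‖x‖} := by
  rw [lipschitzOnWith_iff_dist_le_mul]
  intro x hx y hy
  simp only [Set.mem_setOf_eq] at hx hy
  have hx0 : (0:ℝ) < ‖x‖ := lt_of_lt_of_le one_pos hx
  have hy0 : (0:ℝ) < ‖y‖ := lt_of_lt_of_le one_pos hy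
  rw [dist_eq_norm, dist_eq_norm]
  have key : ‖x‖⁻¹ • x - ‖y‖⁻¹ • y = ‖x‖⁻¹ • (x - y) + (‖x‖⁻¹ - ‖y‖⁻¹) • y := by
    rw [smul_sub, sub_smul]; abel
  rw [key]
  have h1 : ‖‖x‖⁻¹ • (x - y)‖ ≤ ‖x - y‖ := by
    rw [norm_smul, norm_inv, norm_norm]
    exact mul_le_of_le_one_left (norm_nonneg _) (inv_le_one_of_one_le₀ hx)
  have h2 : ‖(‖x‖⁻¹ - ‖y‖⁻¹) • y‖ ≤ ‖x - y‖ := by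
    rw [norm_smul, Real.norm_eq_abs]
    have heq : |‖x‖⁻¹ - ‖y‖⁻¹| = |‖y‖ - ‖x‖| / (‖x‖ * ‖y‖) := by
      rw [inv_sub_inv hx0.ne' hy0.ne', abs_div, abs_of_pos (mul_pos hx0 hy0)]
    rw [heq]
    have habs : |‖y‖ - ‖x‖| ≤ ‖x - y‖ := by
      rw [abs_sub_comm]
      exact abs_norm_sub_norm_le x y
    calc |‖y‖ - ‖x‖| / (‖x‖ * ‖y‖) * ‖y‖ = |‖y‖ - ‖x‖| / ‖x‖ := by
          field_simp
      _ ≤ ‖x - y‖ / 1 := by gcongr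
      _ = ‖x - y‖ := div_one _
  refine le_trans (norm_add_le _ _) ?_
  have h3 : ((2:ℝ≥0):ℝ) * ‖x - y‖ = ‖x - y‖ + ‖x - y‖ := by push_cast; ring
  rw [h3]
  exact add_le_add h1 h2

end lip


lemma insertNth_lipschitz (m : ℕ) (i : Fin (m + 1)) (ε : ℝ) :
    LipschitzWith m (fun y : Fin m → ℝ =>
      ((WithLp.equiv 2 (Fin (m+1) → ℝ)).symm (i.insertNth ε y) :
        EuclideanSpace ℝ (Fin (m+1)))) := by
  apply LipschitzWith.of_dist_le_mul
  intro y y'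
  rw [EuclideanSpace.dist_eq]
  have hsum : ∑ j, dist ((WithLp.equiv 2 (Fin (m+1) → ℝ)).symm (i.insertNth ε y) j)
        ((WithLp.equiv 2 (Fin (m+1) → ℝ)).symm (i.insertNth ε y') j) ^ 2
      = ∑ k : Fin m, dist (y k) (y' k) ^ 2 := by
    simp only [WithLp.equiv_symm_apply, PiLp.toLp_apply]
    rw [Fin.sum_univ_succAbove _ i]
    simp [Fin.insertNth_apply_same, Fin.insertNth_apply_succAbove]
  rw [hsum]
  have hbound : ∑ k : Fin m, dist (y k) (y' k) ^ 2 ≤ m * dist y y' ^ 2 := by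
    calc ∑ k : Fin m, dist (y k) (y' k) ^ 2 ≤ ∑ _k : Fin m, dist y y' ^ 2 := by
          apply Finset.sum_le_sum
          intro k _
          have := dist_le_pi_dist y y' k
          nlinarith [dist_nonneg (x := y k) (y := y' k)]
      _ = m * dist y y' ^ 2 := by simp [mul_comm]
  have hm2 : (m:ℝ) ≤ (m:ℝ)^2 := by exact_mod_cast Nat.le_self_pow two_ne_zero m
  calc Real.sqrt (∑ k : Fin m, dist (y k) (y' k) ^ 2)
      ≤ Real.sqrt (m * dist y y' ^ 2) := Real.sqrt_le_sqrt hbound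
    _ = Real.sqrt m * dist y y' := by
        rw [Real.sqrt_mul (Nat.cast_nonneg m), Real.sqrt_sq dist_nonneg]
    _ ≤ m * dist y y' := by
        gcongr
        calc Real.sqrt m ≤ Real.sqrt ((m:ℝ)^2) := Real.sqrt_le_sqrt hm2
          _ = m := Real.sqrt_sq (Nat.cast_nonneg m)

lemma abs_coord_le_norm {m : ℕ} (v : EuclideanSpace ℝ (Fin m)) (j : Fin m) : |v j| ≤ ‖v‖ := by
  rw [EuclideanSpace.norm_eq]
  have h1 : |v j| = Real.sqrt (‖v j‖ ^ 2) := by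
    rw [Real.sqrt_sq_eq_abs, Real.norm_eq_abs, abs_abs]
  rw [h1]
  apply Real.sqrt_le_sqrt
  exact Finset.single_le_sum (f := fun k => ‖v k‖ ^ 2) (fun k _ => by positivity)
    (Finset.mem_univ j)

lemma sphere_hausdorff_lt_top (m : ℕ) :
    μH[(m:ℝ)] (Metric.sphere (0 : EuclideanSpace ℝ (Fin (m+1))) 1) < ⊤ := by
  set d : ℝ := (m:ℝ) with hdd
  have hd : 0 ≤ d := Nat.cast_nonneg m
  set Q : Set (Fin m → ℝ) := Set.univ.pi (fun _ => Set.Icc (-1:ℝ) 1) with hQ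
  set φ : Fin (m+1) → ℝ → (Fin m → ℝ) → EuclideanSpace ℝ (Fin (m+1)) :=
    fun i ε y => (WithLp.equiv 2 (Fin (m+1) → ℝ)).symm (i.insertNth ε y) with hφ
  set N : EuclideanSpace ℝ (Fin (m+1)) → EuclideanSpace ℝ (Fin (m+1)) :=
    fun x => ‖x‖⁻¹ • x with hN
  have hcover : Metric.sphere (0 : EuclideanSpace ℝ (Fin (m+1))) 1 ⊆
      ⋃ p : Fin (m+1) × Bool, N '' (φ p.1 (if p.2 then 1 else -1) '' Q) := by
    intro x hx
    have hx1 : ‖x‖ = 1 := by simpa using hx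
    obtain ⟨i, -, hi⟩ := Finset.exists_max_image Finset.univ (fun j => |x j|)
      ⟨0, Finset.mem_univ 0⟩
    have hxi : 0 < |x i| := by
      by_contra h
      push_neg at h
      have hall : ∀ j, x j = 0 := fun j =>
        abs_eq_zero.mp (le_antisymm (le_trans (hi j (Finset.mem_univ j)) h) (abs_nonneg _))
      have : ‖x‖ = 0 := by rw [EuclideanSpace.norm_eq]; simp [hall]
      rw [hx1] at this; norm_num at this
    set c : ℝ := |x i|⁻¹ with hc
    have hc0 : 0 < c := inv_pos.mpr hxi
    set z : EuclideanSpace ℝ (Fin (m+1)) := c • x with hz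
    have hzj : ∀ j, z j = c * x j := fun j => rfl
    have hzi : |z i| = 1 := by
      rw [hzj, abs_mul, abs_of_pos hc0, hc, inv_mul_cancel₀ hxi.ne']
    have hzi' : z i = 1 ∨ z i = -1 := by
      rcases (abs_eq (by norm_num : (0:ℝ) ≤ 1)).mp hzi with h | h
      · exact Or.inl h
      · exact Or.inr h
    set b : Bool := decide (z i = 1) with hb
    have hεb : (if b then (1:ℝ) else -1) = z i := by
      rcases hzi' with h | h
      · simp [hb, h]
      · have hne : z i ≠ 1 := by rw [h]; norm_num
        have hbf : b = false := by simp [hb, hne]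
        rw [hbf, h]
        norm_num
    refine Set.mem_iUnion.mpr ⟨(i, b), ?_⟩
    refine ⟨z, ⟨fun k => z (i.succAbove k), ?_, ?_⟩, ?_⟩
    · intro k _
      simp only [Set.mem_Icc]
      rw [← abs_le]
      calc |z (i.succAbove k)| = c * |x (i.succAbove k)| := by
            rw [hzj, abs_mul, abs_of_pos hc0]
        _ ≤ c * |x i| := by
            have := hi (i.succAbove k) (Finset.mem_univ _)
            gcongr
        _ = 1 := by rw [hc, inv_mul_cancel₀ hxi.ne']
    · show (WithLp.equiv 2 (Fin (m+1) → ℝ)).symm (i.insertNth (if b then (1:ℝ) else -1)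
        (fun k => z (i.succAbove k))) = z
      rw [hεb]
      have h := Fin.insertNth_self_removeNth i (fun j => z j)
      exact congrArg (WithLp.equiv 2 (Fin (m+1) → ℝ)).symm h
    · show ‖z‖⁻¹ • z = x
      have hnz : ‖z‖ = c := by
        rw [hz, norm_smul, Real.norm_eq_abs, abs_of_pos hc0, hx1, mul_one]
      rw [hnz, hz, smul_smul, inv_mul_cancel₀ hc0.ne', one_smul]
  have hQfin : μH[d] Q < ⊤ := by
    have hpi : (μH[d] : Measure (Fin m → ℝ)) = volume := by
      rw [show d = ((Fintype.card (Fin m) : ℝ)) by simp [hdd]]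
      exact MeasureTheory.hausdorffMeasure_pi_real
    rw [hpi, hQ, volume_pi_pi]
    simp [Real.volume_Icc]
  have himg : ∀ (i : Fin (m+1)) (ε : ℝ), |ε| = 1 → μH[d] (N '' (φ i ε '' Q)) < ⊤ := by
    intro i ε hε
    have hsub : φ i ε '' Q ⊆ {x : EuclideanSpace ℝ (Fin (m+1)) | 1 ≤ ‖x‖} := by
      rintro _ ⟨y, -, rfl⟩
      have : |φ i ε y i| ≤ ‖φ i ε y‖ := abs_coord_le_norm _ i
      simp only [Set.mem_setOf_eq]
      refine le_trans ?_ this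
      have h5 : φ i ε y i = ε := by
        show ((WithLp.equiv 2 (Fin (m+1) → ℝ)).symm (i.insertNth ε y)) i = ε
        rw [WithLp.equiv_symm_apply, PiLp.toLp_apply]
        exact Fin.insertNth_apply_same (α := fun _ => ℝ) i ε y
      rw [h5, hε]
    have h1 : μH[d] (N '' (φ i ε '' Q)) ≤ (2:ℝ≥0) ^ d * μH[d] (φ i ε '' Q) :=
      (LipschitzOnWith.mono lipschitzOnWith_normalize hsub).hausdorffMeasure_image_le hd
    have h2 : μH[d] (φ i ε '' Q) ≤ ((m:ℝ≥0) : ℝ≥0∞) ^ d * μH[d] Q :=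
      (insertNth_lipschitz m i ε).hausdorffMeasure_image_le hd Q
    calc μH[d] (N '' (φ i ε '' Q)) ≤ (2:ℝ≥0) ^ d * (((m:ℝ≥0) : ℝ≥0∞) ^ d * μH[d] Q) := by
          refine le_trans h1 ?_
          gcongr
      _ < ⊤ := by
          apply ENNReal.mul_lt_top
          · exact ENNReal.rpow_lt_top_of_nonneg hd ENNReal.coe_ne_top
          · exact ENNReal.mul_lt_top (ENNReal.rpow_lt_top_of_nonneg hd ENNReal.coe_ne_top) hQfin
  calc μH[d] (Metric.sphere (0 : EuclideanSpace ℝ (Fin (m+1))) 1)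
      ≤ μH[d] (⋃ p : Fin (m+1) × Bool, N '' (φ p.1 (if p.2 then 1 else -1) '' Q)) :=
        measure_mono hcover
    _ ≤ ∑' p : Fin (m+1) × Bool, μH[d] (N '' (φ p.1 (if p.2 then 1 else -1) '' Q)) :=
        measure_iUnion_le _
    _ < ⊤ := by
        rw [tsum_fintype]
        apply ENNReal.sum_lt_top.mpr
        intro p _
        apply himg
        rcases p.2 with _ | _ <;> simp

lemma sphere_set_eq (n : ℕ) (r : ℝ) (hr : 0 < r) :
    {x : EuclideanSpace ℝ (Fin n) | ‖x‖ = r} =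
      r • {x : EuclideanSpace ℝ (Fin n) | ‖x‖ = 1} := by
  ext x
  simp only [Set.mem_setOf_eq, Set.mem_smul_set]
  constructor
  · intro h
    refine ⟨r⁻¹ • x, ?_, ?_⟩
    · rw [norm_smul, Real.norm_eq_abs, abs_of_pos (inv_pos.mpr hr), h,
        inv_mul_cancel₀ hr.ne']
    · rw [smul_smul, mul_inv_cancel₀ hr.ne', one_smul]
  · rintro ⟨y, hy, rfl⟩
    rw [norm_smul, Real.norm_eq_abs, abs_of_pos hr, hy, mul_one]

/-- Let `n ≥ 3`, `a ∈ ℝ`, `C > 0`, and let `u` be `C¹` on `{|x| > 1}` with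
`|u(x) - 1 - a|x|^(2-n)| ≤ C|x|^(1-n)` and `|∇u(x) - a∇(|x|^(2-n))| ≤ C|x|^(-n)`. Then the
flux integrals converge:
`lim_{r→∞} ∫_{|x|=r} u (∇u · x/r) dH^{n-1} = (2-n) a |𝕊^{n-1}|`. -/
theorem flux_integral_limit
    (n : ℕ) (hn : 3 ≤ n) (a C : ℝ) (hC : 0 < C)
    (u : EuclideanSpace ℝ (Fin n) → ℝ)
    (hu : ContDiffOn ℝ 1 u {x : EuclideanSpace ℝ (Fin n) | 1 < ‖x‖})
    (hu0 : ∀ x : EuclideanSpace ℝ (Fin n), 1 < ‖x‖ →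
      |u x - 1 - a * ‖x‖ ^ ((2 : ℝ) - n)| ≤ C * ‖x‖ ^ ((1 : ℝ) - n))
    (hu1 : ∀ x : EuclideanSpace ℝ (Fin n), 1 < ‖x‖ →
      ‖gradient u x - a • gradient
        (fun y : EuclideanSpace ℝ (Fin n) => ‖y‖ ^ ((2 : ℝ) - n)) x‖ ≤ C * ‖x‖ ^ (-(n : ℝ))) :
    Tendsto
      (fun r : ℝ =>
        ∫ x in {x : EuclideanSpace ℝ (Fin n) | ‖x‖ = r},
          u x * ((inner ℝ (gradient u x) x : ℝ) / r) ∂(μH[(n : ℝ) - 1]))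
      atTop
      (nhds ((2 - (n : ℝ)) * a *
        (μH[(n : ℝ) - 1] {x : EuclideanSpace ℝ (Fin n) | ‖x‖ = 1}).toReal)) := by
  classical
  have hn3 : (3:ℝ) ≤ (n:ℝ) := by exact_mod_cast hn
  set d : ℝ := (n:ℝ) - 1 with hdd
  have hd : 0 ≤ d := by rw [hdd]; linarith
  set S : ℝ → Set (EuclideanSpace ℝ (Fin n)) := fun r => {x | ‖x‖ = r} with hS
  -- finiteness of the unit sphere measure
  have hfin : μH[d] (S 1) < ⊤ := by
    obtain ⟨m, rfl⟩ : ∃ m, n = m + 1 := ⟨n - 1, by omega⟩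
    have h1 : S 1 = Metric.sphere (0 : EuclideanSpace ℝ (Fin (m+1))) 1 := by
      ext x
      simp [hS, mem_sphere_zero_iff_norm]
    have h2 : d = (m:ℝ) := by rw [hdd]; push_cast; ring
    rw [h1, h2]
    exact sphere_hausdorff_lt_top m
  set mR : ℝ := (μH[d] (S 1)).toReal with hmR
  have hmR0 : 0 ≤ mR := ENNReal.toReal_nonneg
  -- scaling
  have hμr : ∀ r : ℝ, 0 < r → μH[d] (S r) = (‖r‖₊ ^ d : ℝ≥0) • μH[d] (S 1) := by
    intro r hr
    rw [hS]
    show μH[d] {x : EuclideanSpace ℝ (Fin n) | ‖x‖ = r} = _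
    rw [sphere_set_eq n r hr]
    exact MeasureTheory.Measure.hausdorffMeasure_smul₀ hd hr.ne' _
  have hfinr : ∀ r : ℝ, 0 < r → μH[d] (S r) < ⊤ := by
    intro r hr
    rw [hμr r hr, ENNReal.smul_def, smul_eq_mul]
    exact ENNReal.mul_lt_top ENNReal.coe_lt_top hfin
  have htoReal : ∀ r : ℝ, 0 < r → (μH[d] (S r)).toReal = r ^ d * mR := by
    intro r hr
    rw [hμr r hr, ENNReal.smul_def, smul_eq_mul, ENNReal.toReal_mul, ENNReal.coe_toReal,
      NNReal.coe_rpow, coe_nnnorm, Real.norm_eq_abs, abs_of_pos hr, hmR]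
  -- continuity of the integrand away from the unit ball
  set Ω : Set (EuclideanSpace ℝ (Fin n)) := {x | 1 < ‖x‖} with hΩ
  have hopen : IsOpen Ω := isOpen_lt continuous_const continuous_norm
  have hgradcont : ContinuousOn (gradient u) Ω := by
    have h1 : ContinuousOn (fderiv ℝ u) Ω := hu.continuousOn_fderiv_of_isOpen hopen le_rfl
    have h2 := (InnerProductSpace.toDual ℝ (EuclideanSpace ℝ (Fin n))).symm.continuous
    exact h2.comp_continuousOn h1
  have hucont : ContinuousOn u Ω := hu.continuousOn
  set c0 : ℝ := (2 - (n:ℝ)) * a with hc0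
  set K : ℝ := (|a| + C) * |c0| + (1 + |a| + C) * C with hK
  have hK0 : 0 ≤ K := by
    rw [hK]
    have := abs_nonneg a
    have := abs_nonneg c0
    positivity
  -- the key quantitative estimate
  have hKey : ∀ r : ℝ, 2 ≤ r →
      |(∫ x in S r, u x * ((inner ℝ (gradient u x) x : ℝ) / r) ∂(μH[d])) - c0 * mR|
        ≤ K * mR / r := by
    intro r hr2
    have hr1 : (1:ℝ) < r := by linarith
    have hr0 : (0:ℝ) < r := by linarith
    -- pointwise estimate on the sphere
    have hpt : ∀ x ∈ S r,
        |u x * ((inner ℝ (gradient u x) x : ℝ) / r) - c0 * r ^ ((1:ℝ) - n)|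
          ≤ K * r ^ (-(n:ℝ)) := by
      intro x hx
      have hxr : ‖x‖ = r := hx
      have hx1 : 1 < ‖x‖ := by rw [hxr]; exact hr1
      have hx0 : x ≠ 0 := by
        intro h; rw [h, norm_zero] at hx1; norm_num at hx1
      have hGx : gradient (fun y : EuclideanSpace ℝ (Fin n) => ‖y‖ ^ ((2:ℝ) - n)) x
          = ((((2:ℝ) - n) * r ^ ((2:ℝ) - n - 2)) • x) := by
        rw [(hasGradientAt_norm_rpow ((2:ℝ) - n) hx0).gradient, hxr]
      set g : EuclideanSpace ℝ (Fin n) := gradient u x with hg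
      set Δ : EuclideanSpace ℝ (Fin n) :=
        g - a • gradient (fun y : EuclideanSpace ℝ (Fin n) => ‖y‖ ^ ((2:ℝ) - n)) x with hΔdef
      have hΔ : ‖Δ‖ ≤ C * r ^ (-(n:ℝ)) := by
        have := hu1 x hx1
        rw [← hxr]
        exact this
      have hginner : (inner ℝ g x : ℝ)
          = a * (((2:ℝ) - n) * r ^ ((2:ℝ) - n - 2) * r ^ 2) + (inner ℝ Δ x : ℝ) := by
        have hgeq : g = a • gradient (fun y : EuclideanSpace ℝ (Fin n) => ‖y‖ ^ ((2:ℝ) - n)) x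
            + Δ := by rw [hΔdef]; abel
        rw [hgeq, inner_add_left, real_inner_smul_left, hGx, real_inner_smul_left,
          real_inner_self_eq_norm_sq, hxr]
        try ring
      set e : ℝ := (inner ℝ Δ x : ℝ) / r with he_def
      have he : |e| ≤ C * r ^ (-(n:ℝ)) := by
        rw [he_def, abs_div, abs_of_pos hr0]
        rw [div_le_iff₀ hr0]
        calc |(inner ℝ Δ x : ℝ)| ≤ ‖Δ‖ * ‖x‖ := abs_real_inner_le_norm Δ x
          _ = ‖Δ‖ * r := by rw [hxr]
          _ ≤ (C * r ^ (-(n:ℝ))) * r := by gcongr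
      have hpow : r ^ ((2:ℝ) - n - 2) * r ^ 2 / r = r ^ ((1:ℝ) - n) := by
        rw [show (r:ℝ) ^ 2 = r ^ (2:ℝ) by rw [← Real.rpow_natCast r 2]; norm_num,
          div_eq_mul_inv, ← Real.rpow_neg_one r, ← Real.rpow_add hr0, ← Real.rpow_add hr0]
        congr 1; ring
      have hP : (inner ℝ g x : ℝ) / r = c0 * r ^ ((1:ℝ) - n) + e := by
        rw [hginner, add_div, he_def]
        congr 1
        rw [hc0, ← hpow]
        ring
      have hu0' := hu0 x hx1
      rw [hxr] at hu0'
      have hr21 : r ^ ((1:ℝ) - n) ≤ r ^ ((2:ℝ) - n) :=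
        Real.rpow_le_rpow_of_exponent_le hr1.le (by linarith)
      have hu1' : |u x - 1| ≤ (|a| + C) * r ^ ((2:ℝ) - n) := by
        have : |u x - 1| ≤ |u x - 1 - a * r ^ ((2:ℝ) - n)| + |a * r ^ ((2:ℝ) - n)| := by
          calc |u x - 1| = |(u x - 1 - a * r ^ ((2:ℝ) - n)) + a * r ^ ((2:ℝ) - n)| := by
                ring_nf
            _ ≤ _ := abs_add_le _ _
        have h2 : |a * r ^ ((2:ℝ) - n)| = |a| * r ^ ((2:ℝ) - n) := by
          rw [abs_mul, abs_of_pos (Real.rpow_pos_of_pos hr0 _)]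
        calc |u x - 1| ≤ |u x - 1 - a * r ^ ((2:ℝ) - n)| + |a| * r ^ ((2:ℝ) - n) := by
              rw [← h2]; exact this
          _ ≤ C * r ^ ((1:ℝ) - n) + |a| * r ^ ((2:ℝ) - n) := by gcongr
          _ ≤ C * r ^ ((2:ℝ) - n) + |a| * r ^ ((2:ℝ) - n) := by gcongr
          _ = (|a| + C) * r ^ ((2:ℝ) - n) := by ring
      have hr2le1 : r ^ ((2:ℝ) - n) ≤ 1 :=
        Real.rpow_le_one_of_one_le_of_nonpos hr1.le (by linarith)
      have hub : |u x| ≤ 1 + |a| + C := by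
        calc |u x| = |(u x - 1) + 1| := by ring_nf
          _ ≤ |u x - 1| + 1 := by simpa using abs_add_le (u x - 1) 1
          _ ≤ (|a| + C) * r ^ ((2:ℝ) - n) + 1 := by gcongr
          _ ≤ (|a| + C) * 1 + 1 := by
              gcongr
          _ = 1 + |a| + C := by ring
      have hsplit : u x * ((inner ℝ g x : ℝ) / r) - c0 * r ^ ((1:ℝ) - n)
          = (u x - 1) * (c0 * r ^ ((1:ℝ) - n)) + u x * e := by
        rw [hP]; ring
      have hb1 : |(u x - 1) * (c0 * r ^ ((1:ℝ) - n))|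
          ≤ (|a| + C) * |c0| * r ^ (-(n:ℝ)) := by
        rw [abs_mul, abs_mul, abs_of_pos (Real.rpow_pos_of_pos hr0 _)]
        calc |u x - 1| * (|c0| * r ^ ((1:ℝ) - n))
            ≤ ((|a| + C) * r ^ ((2:ℝ) - n)) * (|c0| * r ^ ((1:ℝ) - n)) := by
              gcongr
          _ = (|a| + C) * |c0| * (r ^ ((2:ℝ) - n) * r ^ ((1:ℝ) - n)) := by ring
          _ = (|a| + C) * |c0| * r ^ (((2:ℝ) - n) + ((1:ℝ) - n)) := by
              rw [← Real.rpow_add hr0]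
          _ ≤ (|a| + C) * |c0| * r ^ (-(n:ℝ)) := by
              have h3 : ((2:ℝ) - n) + ((1:ℝ) - n) ≤ -(n:ℝ) := by linarith
              have := Real.rpow_le_rpow_of_exponent_le hr1.le h3
              have h4 : 0 ≤ (|a| + C) * |c0| := by positivity
              exact mul_le_mul_of_nonneg_left this h4
      have hb2 : |u x * e| ≤ (1 + |a| + C) * (C * r ^ (-(n:ℝ))) := by
        rw [abs_mul]
        apply mul_le_mul hub he (abs_nonneg _) (by positivity)
      calc |u x * ((inner ℝ g x : ℝ) / r) - c0 * r ^ ((1:ℝ) - n)|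
          = |(u x - 1) * (c0 * r ^ ((1:ℝ) - n)) + u x * e| := by rw [hsplit]
        _ ≤ |(u x - 1) * (c0 * r ^ ((1:ℝ) - n))| + |u x * e| := abs_add_le _ _
        _ ≤ (|a| + C) * |c0| * r ^ (-(n:ℝ)) + (1 + |a| + C) * (C * r ^ (-(n:ℝ))) :=
            add_le_add hb1 hb2
        _ = K * r ^ (-(n:ℝ)) := by rw [hK]; ring
    -- integrability and the integral estimate
    have Smeas : MeasurableSet (S r) :=
      (isClosed_eq continuous_norm continuous_const).measurableSet
    have Ssub : S r ⊆ Ω := by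
      intro x hx
      have : ‖x‖ = r := hx
      show 1 < ‖x‖
      rw [this]; exact hr1
    set f : EuclideanSpace ℝ (Fin n) → ℝ :=
      fun x => u x * ((inner ℝ (gradient u x) x : ℝ) / r) with hf
    have hfc : ContinuousOn f (S r) := by
      apply ContinuousOn.mono _ Ssub
      exact (hucont.mul ((hgradcont.inner (continuousOn_id)).div_const r))
    have haesm : AEStronglyMeasurable f ((μH[d]).restrict (S r)) :=
      hfc.aestronglyMeasurable Smeas
    haveI hfinmeas : IsFiniteMeasure ((μH[d]).restrict (S r)) :=
      ⟨by rw [Measure.restrict_apply_univ]; exact hfinr r hr0⟩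
    set κ : ℝ := c0 * r ^ ((1:ℝ) - n) with hκ
    have hg0m : AEStronglyMeasurable (fun x => f x - κ) ((μH[d]).restrict (S r)) :=
      haesm.sub aestronglyMeasurable_const
    have haebound : ∀ᵐ x ∂((μH[d]).restrict (S r)), ‖f x - κ‖ ≤ K * r ^ (-(n:ℝ)) := by
      rw [ae_restrict_iff' Smeas]
      apply ae_of_all
      intro x hx
      rw [Real.norm_eq_abs]
      exact hpt x hx
    have hg0int : Integrable (fun x => f x - κ) ((μH[d]).restrict (S r)) :=
      (integrable_const (K * r ^ (-(n:ℝ)))).mono' hg0m haebound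
    have hconst : Integrable (fun _ => κ) ((μH[d]).restrict (S r)) := integrable_const κ
    have hfint : Integrable f ((μH[d]).restrict (S r)) := by
      have h7 : f = (fun x => f x - κ) + fun _ => κ := by
        funext x; simp only [Pi.add_apply]; ring
      rw [h7]
      exact hg0int.add hconst
    have hIsplit : ∫ x in S r, f x ∂(μH[d])
        = (∫ x in S r, (f x - κ) ∂(μH[d])) + κ * (μH[d] (S r)).toReal := by
      have h1 : ∫ x in S r, (f x - κ) ∂(μH[d])
          = (∫ x in S r, f x ∂(μH[d])) - ∫ _x in S r, κ ∂(μH[d]) :=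
        integral_sub hfint hconst
      rw [h1, setIntegral_const, smul_eq_mul, measureReal_def]
      ring
    have hIbound : |∫ x in S r, (f x - κ) ∂(μH[d])|
        ≤ (K * r ^ (-(n:ℝ))) * (μH[d] (S r)).toReal := by
      rw [← Real.norm_eq_abs]
      exact norm_setIntegral_le_of_norm_le_const (hfinr r hr0)
        (fun x hx => by rw [Real.norm_eq_abs]; exact hpt x hx)
    have hκμ : κ * (μH[d] (S r)).toReal = c0 * mR := by
      rw [hκ, htoReal r hr0]
      have : r ^ ((1:ℝ) - n) * r ^ d = 1 := by
        rw [← Real.rpow_add hr0, hdd]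
        have : ((1:ℝ) - n) + ((n:ℝ) - 1) = 0 := by ring
        rw [this, Real.rpow_zero]
      calc c0 * r ^ ((1:ℝ) - n) * (r ^ d * mR)
          = c0 * mR * (r ^ ((1:ℝ) - n) * r ^ d) := by ring
        _ = c0 * mR := by rw [this, mul_one]
    have hend : (K * r ^ (-(n:ℝ))) * (μH[d] (S r)).toReal = K * mR / r := by
      rw [htoReal r hr0]
      have : r ^ (-(n:ℝ)) * r ^ d = r⁻¹ := by
        rw [← Real.rpow_add hr0, hdd]
        have h5 : (-(n:ℝ)) + ((n:ℝ) - 1) = -1 := by ring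
        rw [h5, Real.rpow_neg_one]
      calc K * r ^ (-(n:ℝ)) * (r ^ d * mR) = K * mR * (r ^ (-(n:ℝ)) * r ^ d) := by ring
        _ = K * mR * r⁻¹ := by rw [this]
        _ = K * mR / r := by rw [div_eq_mul_inv]
    calc |(∫ x in S r, f x ∂(μH[d])) - c0 * mR|
        = |∫ x in S r, (f x - κ) ∂(μH[d])| := by
          rw [hIsplit, hκμ]; congr 1; ring
      _ ≤ (K * r ^ (-(n:ℝ))) * (μH[d] (S r)).toReal := hIbound
      _ = K * mR / r := hend
  -- conclude with the squeeze theorem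
  rw [show (2 - (n:ℝ)) * a * (μH[(n:ℝ) - 1] {x : EuclideanSpace ℝ (Fin n) | ‖x‖ = 1}).toReal
      = c0 * mR from rfl]
  rw [tendsto_iff_dist_tendsto_zero]
  apply tendsto_of_tendsto_of_tendsto_of_le_of_le' (g := fun _ : ℝ => (0:ℝ))
    (h := fun r : ℝ => K * mR / r) tendsto_const_nhds
  · exact Filter.Tendsto.const_div_atTop tendsto_id (K * mR)
  · exact Eventually.of_forall fun r => dist_nonneg
  · filter_upwards [eventually_ge_atTop (2:ℝ)] with r hr
    rw [Real.dist_eq]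
    exact hKey r hr
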